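/- Let w₁,…,w_n ≥ 0 with W = ∑ w_i > 0 and vectors x₁,…,x_n ∈ ℝ^p. Define the weighted mean μ_w = (∑ w_i x_i)/W and weighted scatter V_w = ∑ w_i (x_i − μ_w)(x_i − μ_w)ᵀ. If w'_i = c_i w_i with c_i ∈ [e^{−η}, e^{η}] for all i, then e^{−2η} V_w ⪯ V_{w'} ⪯ e^{2η} V_w in the Loewner order. -/

import Mathlib

open Matrix

lemma quadform {n p : ℕ} (a : Fin n → ℝ) (y : Fin n → Fin p → ℝ)
    (V : Matrix (Fin p) (Fin p) ℝ) (hV : ∀ j k, V j k = ∑ i, a i * y i j * y i k)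
    (u : Fin p → ℝ) :
    u ⬝ᵥ V *ᵥ u = ∑ i, a i * (∑ j, u j * y i j)^2 := by
  have step : ∀ i : Fin n, a i * (∑ j, u j * y i j)^2
      = ∑ j, ∑ k, u j * (a i * y i j * y i k * u k) := by
    intro i
    rw [pow_two, Finset.sum_mul_sum, Finset.mul_sum]
    refine Finset.sum_congr rfl fun j _ => ?_
    rw [Finset.mul_sum]
    exact Finset.sum_congr rfl fun k _ => by ring
  simp only [dotProduct, mulVec, hV, Finset.sum_mul, Finset.mul_sum, step]
  calc (∑ j, ∑ k, ∑ i, u j * (a i * y i j * y i k * u k))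
      = ∑ j, ∑ i, ∑ k, u j * (a i * y i j * y i k * u k) :=
        Finset.sum_congr rfl fun j _ => Finset.sum_comm
    _ = ∑ i, ∑ j, ∑ k, u j * (a i * y i j * y i k * u k) := Finset.sum_comm

lemma varmin {n : ℕ} (a s : Fin n → ℝ) (hA : 0 < ∑ i, a i) (m : ℝ) :
    ∑ i, a i * (s i - (∑ i, a i * s i)/(∑ i, a i))^2 ≤ ∑ i, a i * (s i - m)^2 := by
  set A := ∑ i, a i with hAdef
  set μ := (∑ i, a i * s i)/A with hμdef
  have hμA : μ * A = ∑ i, a i * s i := div_mul_cancel₀ _ hA.ne'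
  have hsum0 : ∑ i, a i * (s i - μ) = 0 := by
    have h1 : ∑ i, a i * (s i - μ) = (∑ i, a i * s i) - (∑ i, a i) * μ := by
      simp [mul_sub, Finset.sum_sub_distrib, Finset.sum_mul]
    rw [h1, ← hAdef, ← hμA]; ring
  have expand : ∑ i, a i * (s i - m)^2
      = (∑ i, a i * (s i - μ)^2) + A*(μ-m)^2 + 2*(μ-m)*(∑ i, a i * (s i - μ)) := by
    have h : ∀ i : Fin n, a i * (s i - m)^2
        = a i * (s i - μ)^2 + a i * (μ-m)^2 + 2*(μ-m)*(a i * (s i - μ)) :=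
      fun i => by ring
    rw [Finset.sum_congr rfl fun i _ => h i, Finset.sum_add_distrib, Finset.sum_add_distrib,
      ← Finset.sum_mul, ← Finset.mul_sum, ← hAdef]
  rw [expand, hsum0]
  nlinarith [sq_nonneg (μ - m), hA.le]

/-- Multiplicative perturbation of weights by factors in `[e^{−η}, e^{η}]` changes the
weighted scatter matrix by at most `e^{±2η}` in the Loewner order. -/
theorem stmt13 {n p : ℕ} (w c : Fin n → ℝ) (x : Fin n → (Fin p → ℝ)) (η : ℝ)
    (hw : ∀ i, 0 ≤ w i) (hW : 0 < ∑ i, w i)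
    (hc : ∀ i, Real.exp (-η) ≤ c i ∧ c i ≤ Real.exp η)
    (μw μw' : Fin p → ℝ)
    (hμw : ∀ j, μw j = (∑ i, w i * x i j) / (∑ i, w i))
    (hμw' : ∀ j, μw' j = (∑ i, c i * w i * x i j) / (∑ i, c i * w i))
    (Vw Vw' : Matrix (Fin p) (Fin p) ℝ)
    (hVw : ∀ j k, Vw j k = ∑ i, w i * (x i j - μw j) * (x i k - μw k))
    (hVw' : ∀ j k, Vw' j k = ∑ i, c i * w i * (x i j - μw' j) * (x i k - μw' k)) :
    (Vw' - Real.exp (-(2 * η)) • Vw).PosSemidef ∧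
      (Real.exp (2 * η) • Vw - Vw').PosSemidef := by
  -- η ≥ 0
  have hη : 0 ≤ η := by
    have hn : (Finset.univ : Finset (Fin n)).Nonempty := by
      by_contra h
      rw [Finset.not_nonempty_iff_eq_empty] at h
      rw [h, Finset.sum_empty] at hW
      exact lt_irrefl _ hW
    obtain ⟨i0, _⟩ := hn
    have h1 := (hc i0).1.trans (hc i0).2
    have := Real.exp_le_exp.mp h1
    linarith
  have hcpos : ∀ i, 0 < c i := fun i => (Real.exp_pos _).trans_le (hc i).1
  have hcw : ∀ i, 0 ≤ c i * w i := fun i => mul_nonneg (hcpos i).le (hw i)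
  have hW' : 0 < ∑ i, c i * w i := by
    have h1 : Real.exp (-η) * ∑ i, w i ≤ ∑ i, c i * w i := by
      rw [Finset.mul_sum]
      exact Finset.sum_le_sum fun i _ => mul_le_mul_of_nonneg_right (hc i).1 (hw i)
    nlinarith [Real.exp_pos (-η)]
  -- Hermitian
  have hVwH : Vw.IsHermitian := by
    ext j k
    simp only [conjTranspose_apply, star_trivial, hVw]
    exact Finset.sum_congr rfl fun i _ => by ring
  have hVw'H : Vw'.IsHermitian := by
    ext j k
    simp only [conjTranspose_apply, star_trivial, hVw']
    exact Finset.sum_congr rfl fun i _ => by ring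
  have hsmul : ∀ r : ℝ, (r • Vw).IsHermitian := fun r => by
    show (r • Vw)ᴴ = r • Vw
    rw [conjTranspose_smul, star_trivial, hVwH]
  -- quadratic form bounds
  have key : ∀ u : Fin p → ℝ,
      Real.exp (-(2*η)) * (u ⬝ᵥ Vw *ᵥ u) ≤ u ⬝ᵥ Vw' *ᵥ u ∧
      u ⬝ᵥ Vw' *ᵥ u ≤ Real.exp (2*η) * (u ⬝ᵥ Vw *ᵥ u) := by
    intro u
    set s : Fin n → ℝ := fun i => ∑ j, u j * x i j with hs
    set m : ℝ := (∑ i, w i * s i) / (∑ i, w i) with hm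
    set m' : ℝ := (∑ i, c i * w i * s i) / (∑ i, c i * w i) with hm'
    have hum : ∑ j, u j * μw j = m := by
      have h1 : ∑ j, u j * μw j = (∑ j, u j * ∑ i, w i * x i j) / (∑ i, w i) := by
        rw [Finset.sum_div]
        exact Finset.sum_congr rfl fun j _ => by rw [hμw]; ring
      rw [h1, hm]
      congr 1
      calc ∑ j, u j * ∑ i, w i * x i j
          = ∑ j, ∑ i, u j * (w i * x i j) := by
            exact Finset.sum_congr rfl fun j _ => Finset.mul_sum _ _ _
        _ = ∑ i, ∑ j, u j * (w i * x i j) := Finset.sum_comm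
        _ = ∑ i, w i * s i := by
            refine Finset.sum_congr rfl fun i _ => ?_
            rw [hs, Finset.mul_sum]
            exact Finset.sum_congr rfl fun j _ => by ring
    have hum' : ∑ j, u j * μw' j = m' := by
      have h1 : ∑ j, u j * μw' j = (∑ j, u j * ∑ i, c i * w i * x i j) / (∑ i, c i * w i) := by
        rw [Finset.sum_div]
        exact Finset.sum_congr rfl fun j _ => by rw [hμw']; ring
      rw [h1, hm']
      congr 1
      calc ∑ j, u j * ∑ i, c i * w i * x i j
          = ∑ j, ∑ i, u j * (c i * w i * x i j) := by
            exact Finset.sum_congr rfl fun j _ => Finset.mul_sum _ _ _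
        _ = ∑ i, ∑ j, u j * (c i * w i * x i j) := Finset.sum_comm
        _ = ∑ i, c i * w i * s i := by
            refine Finset.sum_congr rfl fun i _ => ?_
            rw [hs, Finset.mul_sum]
            exact Finset.sum_congr rfl fun j _ => by ring
    have hq : u ⬝ᵥ Vw *ᵥ u = ∑ i, w i * (s i - m)^2 := by
      rw [quadform w (fun i j => x i j - μw j) Vw hVw u]
      refine Finset.sum_congr rfl fun i _ => ?_
      congr 1
      rw [show (∑ j, u j * (x i j - μw j)) = (∑ j, u j * x i j) - ∑ j, u j * μw j by
        rw [← Finset.sum_sub_distrib]; exact Finset.sum_congr rfl fun j _ => by ring,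
        hum]
    have hq' : u ⬝ᵥ Vw' *ᵥ u = ∑ i, c i * w i * (s i - m')^2 := by
      rw [quadform (fun i => c i * w i) (fun i j => x i j - μw' j) Vw' hVw' u]
      refine Finset.sum_congr rfl fun i _ => ?_
      congr 1
      rw [show (∑ j, u j * (x i j - μw' j)) = (∑ j, u j * x i j) - ∑ j, u j * μw' j by
        rw [← Finset.sum_sub_distrib]; exact Finset.sum_congr rfl fun j _ => by ring,
        hum']
    have hqnn : 0 ≤ ∑ i, w i * (s i - m)^2 :=
      Finset.sum_nonneg fun i _ => mul_nonneg (hw i) (sq_nonneg _)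
    have hq'nn : 0 ≤ ∑ i, c i * w i * (s i - m')^2 :=
      Finset.sum_nonneg fun i _ => mul_nonneg (hcw i) (sq_nonneg _)
    -- upper: q' ≤ e^η q
    have hub : ∑ i, c i * w i * (s i - m')^2 ≤ Real.exp η * ∑ i, w i * (s i - m)^2 := by
      have h1 : ∑ i, c i * w i * (s i - m')^2 ≤ ∑ i, c i * w i * (s i - m)^2 :=
        varmin (fun i => c i * w i) s hW' m
      have h2 : ∑ i, c i * w i * (s i - m)^2 ≤ ∑ i, Real.exp η * (w i * (s i - m)^2) := by
        refine Finset.sum_le_sum fun i _ => ?_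
        have := mul_le_mul_of_nonneg_right (hc i).2
          (mul_nonneg (hw i) (sq_nonneg (s i - m)))
        calc c i * w i * (s i - m)^2 = c i * (w i * (s i - m)^2) := by ring
          _ ≤ Real.exp η * (w i * (s i - m)^2) := this
      rw [Finset.mul_sum]
      exact h1.trans h2
    -- lower: q ≤ e^η q'
    have hlb : ∑ i, w i * (s i - m)^2 ≤ Real.exp η * ∑ i, c i * w i * (s i - m')^2 := by
      have h1 : ∑ i, w i * (s i - m)^2 ≤ ∑ i, w i * (s i - m')^2 := varmin w s hW m'
      have h2 : ∑ i, w i * (s i - m')^2 ≤ ∑ i, Real.exp η * (c i * w i * (s i - m')^2) := by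
        refine Finset.sum_le_sum fun i _ => ?_
        have hge : 1 ≤ Real.exp η * c i := by
          have := mul_le_mul_of_nonneg_left (hc i).1 (Real.exp_pos η).le
          rwa [← Real.exp_add, add_neg_cancel, Real.exp_zero] at this
        have hnn : 0 ≤ w i * (s i - m')^2 := mul_nonneg (hw i) (sq_nonneg _)
        calc w i * (s i - m')^2 = 1 * (w i * (s i - m')^2) := by ring
          _ ≤ (Real.exp η * c i) * (w i * (s i - m')^2) :=
            mul_le_mul_of_nonneg_right hge hnn
          _ = Real.exp η * (c i * w i * (s i - m')^2) := by ring
      rw [Finset.mul_sum]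
      exact h1.trans h2
    have hexp1 : Real.exp η ≤ Real.exp (2*η) := Real.exp_le_exp.mpr (by linarith)
    have hexp2 : Real.exp (-(2*η)) ≤ Real.exp (-η) := Real.exp_le_exp.mpr (by linarith)
    have hee : Real.exp (-η) * Real.exp η = 1 := by
      rw [← Real.exp_add, neg_add_cancel, Real.exp_zero]
    constructor
    · rw [hq, hq']
      have h3 : Real.exp (-η) * (∑ i, w i * (s i - m)^2) ≤ ∑ i, c i * w i * (s i - m')^2 := by
        have := mul_le_mul_of_nonneg_left hlb (Real.exp_pos (-η)).le
        rw [← mul_assoc, hee, one_mul] at this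
        exact this
      calc Real.exp (-(2*η)) * (∑ i, w i * (s i - m)^2)
          ≤ Real.exp (-η) * (∑ i, w i * (s i - m)^2) :=
            mul_le_mul_of_nonneg_right hexp2 hqnn
        _ ≤ _ := h3
    · rw [hq, hq']
      exact hub.trans (mul_le_mul_of_nonneg_right hexp1 hqnn)
  constructor
  · refine posSemidef_iff_dotProduct_mulVec.mpr ⟨hVw'H.sub (hsmul _), fun u => ?_⟩
    have h := (key u).1
    simp only [star_trivial, sub_mulVec, smul_mulVec, dotProduct_sub, dotProduct_smul,
      smul_eq_mul]
    linarith
  · refine posSemidef_iff_dotProduct_mulVec.mpr ⟨(hsmul _).sub hVw'H, fun u => ?_⟩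
    have h := (key u).2
    simp only [star_trivial, sub_mulVec, smul_mulVec, dotProduct_sub, dotProduct_smul,
      smul_eq_mul]
    linarith
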